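/- For all r1, r2, r3 > 0, with θ_i = arccos[(cosh(r_i + r_j)·cosh(r_i + r_k) − cosh(r_j + r_k)) / (sinh(r_i + r_j)·sinh(r_i + r_k))] for {i,j,k} = {1,2,3}, one has θ1·cosh(r1) + θ2·cosh(r2) + θ3·cosh(r3) < π. -/

import Mathlib

open Real

/-- The inner angle at the center of the circle of radius `ri` in the triangle formed by the
centers of three mutually externally tangent hyperbolic circles of radii `ri`, `rj`, `rk`. -/
noncomputable def innerAngle (ri rj rk : ℝ) : ℝ :=
  Real.arccos ((Real.cosh (ri + rj) * Real.cosh (ri + rk) - Real.cosh (rj + rk)) /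
    (Real.sinh (ri + rj) * Real.sinh (ri + rk)))

private lemma hypJ0a (x b c : ℝ) :
    (Real.sinh (x+b) * Real.sinh (x+c)) ^ 2
      - (Real.cosh (x+b) * Real.cosh (x+c) - Real.cosh (b+c)) ^ 2
      = 4 * (Real.sinh (x+b+c) * Real.sinh x * Real.sinh b * Real.sinh c) := by
  simp only [Real.cosh_eq, Real.sinh_eq, Real.exp_add, Real.exp_neg]; field_simp; ring

private lemma hypJ0b (x b c : ℝ) :
    (Real.sinh (x+b) * Real.sinh (b+c)) ^ 2
      - (Real.cosh (x+b) * Real.cosh (b+c) - Real.cosh (x+c)) ^ 2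
      = 4 * (Real.sinh (x+b+c) * Real.sinh x * Real.sinh b * Real.sinh c) := by
  simp only [Real.cosh_eq, Real.sinh_eq, Real.exp_add, Real.exp_neg]; field_simp; ring

private lemma hypJ0c (x b c : ℝ) :
    (Real.sinh (x+c) * Real.sinh (b+c)) ^ 2
      - (Real.cosh (x+c) * Real.cosh (b+c) - Real.cosh (x+b)) ^ 2
      = 4 * (Real.sinh (x+b+c) * Real.sinh x * Real.sinh b * Real.sinh c) := by
  simp only [Real.cosh_eq, Real.sinh_eq, Real.exp_add, Real.exp_neg]; field_simp; ring

private lemma hypJ1 (x b c : ℝ) :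
    Real.sinh (x+b) * Real.sinh (x+c) - (Real.cosh (x+b) * Real.cosh (x+c) - Real.cosh (b+c))
      = 2 * Real.sinh b * Real.sinh c := by
  simp only [Real.cosh_eq, Real.sinh_eq, Real.exp_add, Real.exp_neg]; field_simp; ring

private lemma hypJ4 (x b c : ℝ) :
    Real.sinh (x+b) * Real.sinh (x+c) + (Real.cosh (x+b) * Real.cosh (x+c) - Real.cosh (b+c))
      = 2 * Real.sinh (x+b+c) * Real.sinh x := by
  simp only [Real.cosh_eq, Real.sinh_eq, Real.exp_add, Real.exp_neg]; field_simp; ring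

private lemma hypJ5 (x b c : ℝ) :
    Real.sinh (x+b) * Real.sinh (b+c) - (Real.cosh (x+b) * Real.cosh (b+c) - Real.cosh (x+c))
      = 2 * Real.sinh x * Real.sinh c := by
  simp only [Real.cosh_eq, Real.sinh_eq, Real.exp_add, Real.exp_neg]; field_simp; ring

private lemma hypJ6 (x b c : ℝ) :
    Real.sinh (x+b) * Real.sinh (b+c) + (Real.cosh (x+b) * Real.cosh (b+c) - Real.cosh (x+c))
      = 2 * Real.sinh (x+b+c) * Real.sinh b := by
  simp only [Real.cosh_eq, Real.sinh_eq, Real.exp_add, Real.exp_neg]; field_simp; ring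

private lemma hypJ7 (x b c : ℝ) :
    Real.sinh (x+c) * Real.sinh (b+c) - (Real.cosh (x+c) * Real.cosh (b+c) - Real.cosh (x+b))
      = 2 * Real.sinh x * Real.sinh b := by
  simp only [Real.cosh_eq, Real.sinh_eq, Real.exp_add, Real.exp_neg]; field_simp; ring

private lemma hypJ8 (x b c : ℝ) :
    Real.sinh (x+c) * Real.sinh (b+c) + (Real.cosh (x+c) * Real.cosh (b+c) - Real.cosh (x+b))
      = 2 * Real.sinh (x+b+c) * Real.sinh c := by
  simp only [Real.cosh_eq, Real.sinh_eq, Real.exp_add, Real.exp_neg]; field_simp; ring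

private lemma hypP2 (x b c : ℝ) :
    (Real.sinh (x+b) * Real.cosh (b+c) - Real.sinh (x+c)) * (Real.sinh (x+b) * Real.sinh (b+c))
      - (Real.cosh (x+b) * Real.cosh (b+c) - Real.cosh (x+c)) * (Real.cosh (x+b) * Real.sinh (b+c))
      = -(2 * Real.sinh b * Real.sinh c * Real.sinh (b+c)) := by
  simp only [Real.cosh_eq, Real.sinh_eq, Real.exp_add, Real.exp_neg]; field_simp; ring

private lemma hypP3 (x b c : ℝ) :
    (Real.sinh (x+c) * Real.cosh (b+c) - Real.sinh (x+b)) * (Real.sinh (x+c) * Real.sinh (b+c))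
      - (Real.cosh (x+c) * Real.cosh (b+c) - Real.cosh (x+b)) * (Real.cosh (x+c) * Real.sinh (b+c))
      = -(2 * Real.sinh b * Real.sinh c * Real.sinh (b+c)) := by
  simp only [Real.cosh_eq, Real.sinh_eq, Real.exp_add, Real.exp_neg]; field_simp; ring

private lemma hypJ3 (x b c : ℝ) :
    Real.cosh b * Real.sinh (x+c) + Real.cosh c * Real.sinh (x+b)
      - Real.cosh x * (Real.sinh (x+b) * Real.cosh (x+c) + Real.cosh (x+b) * Real.sinh (x+c))
      = -(2 * Real.sinh x * (Real.sinh (x+b) * Real.sinh (x+c))) := by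
  simp only [Real.cosh_eq, Real.sinh_eq, Real.exp_add, Real.exp_neg]; field_simp; ring

private lemma eZero2 (b c : ℝ) :
    Real.cosh b * Real.cosh (b+c) - Real.cosh c = Real.sinh b * Real.sinh (b+c) := by
  simp only [Real.cosh_eq, Real.sinh_eq, Real.exp_add, Real.exp_neg]; field_simp; ring

private lemma eZero3 (b c : ℝ) :
    Real.cosh c * Real.cosh (b+c) - Real.cosh b = Real.sinh c * Real.sinh (b+c) := by
  simp only [Real.cosh_eq, Real.sinh_eq, Real.exp_add, Real.exp_neg]; field_simp; ring

/-- For `-1 < q < 1`, `arccos q < 2 * tan (arccos q / 2)`. -/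
private lemma arccos_lt_tanHalf {q : ℝ} (hgt : -1 < q) (hlt : q < 1) :
    Real.arccos q < 2 * (Real.sqrt (1 - q ^ 2) / (1 + q)) := by
  have hle : Real.arccos q ≤ π := Real.arccos_le_pi q
  have hltpi : Real.arccos q < π := by
    rcases eq_or_lt_of_le hle with h | h
    · exfalso
      have hc := Real.cos_arccos hgt.le hlt.le
      rw [h, Real.cos_pi] at hc
      linarith
    · exact h
  have hpos : 0 < Real.arccos q := Real.arccos_pos.mpr hlt
  set φ := Real.arccos q / 2 with hφ
  have hφ1 : 0 < φ := by positivity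
  have hφ2 : φ < π / 2 := by rw [hφ]; linarith
  have ht := Real.lt_tan hφ1 hφ2
  have hcosφ : 0 < Real.cos φ :=
    Real.cos_pos_of_mem_Ioo ⟨by linarith [Real.pi_pos], hφ2⟩
  have harc : Real.arccos q = 2 * φ := by rw [hφ]; ring
  have h1' : Real.sqrt (1 - q ^ 2) = 2 * Real.sin φ * Real.cos φ := by
    rw [← Real.sin_arccos, harc, Real.sin_two_mul]
  have h2' : 1 + q = 2 * Real.cos φ ^ 2 := by
    have hc := Real.cos_arccos hgt.le hlt.le
    have h2m := Real.cos_two_mul φ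
    rw [← harc, hc] at h2m
    linarith
  have key : Real.sqrt (1 - q ^ 2) / (1 + q) = Real.tan φ := by
    rw [h1', h2', Real.tan_eq_sin_div_cos]
    field_simp
  rw [key, harc]
  linarith

private lemma sqrt_aux {n d V : ℝ} (hd : 0 < d) (hV : 0 < V) (h : d ^ 2 - n ^ 2 = 4 * V) :
    Real.sqrt (1 - (n / d) ^ 2) = 2 * Real.sqrt V / d := by
  have hs : Real.sqrt V ^ 2 = V := Real.sq_sqrt hV.le
  have h1 : 1 - (n / d) ^ 2 = (2 * Real.sqrt V / d) ^ 2 := by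
    field_simp; nlinarith [hs]
  rw [h1, Real.sqrt_sq (by positivity)]

set_option maxHeartbeats 2000000 in
/-- The total geodesic curvature, as a function of the first radius, is strictly decreasing. -/
private lemma aux_anti (b c : ℝ) (hb : 0 < b) (hc : 0 < c) :
    StrictAntiOn (fun x : ℝ =>
      Real.arccos ((Real.cosh (x+b) * Real.cosh (x+c) - Real.cosh (b+c)) /
          (Real.sinh (x+b) * Real.sinh (x+c))) * Real.cosh x +
      Real.arccos ((Real.cosh (x+b) * Real.cosh (b+c) - Real.cosh (x+c)) /
          (Real.sinh (x+b) * Real.sinh (b+c))) * Real.cosh b +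
      Real.arccos ((Real.cosh (x+c) * Real.cosh (b+c) - Real.cosh (x+b)) /
          (Real.sinh (x+c) * Real.sinh (b+c))) * Real.cosh c) (Set.Ici 0) := by
  have hsbc : 0 < Real.sinh (b+c) := Real.sinh_pos_iff.mpr (by linarith)
  have hsb : 0 < Real.sinh b := Real.sinh_pos_iff.mpr hb
  have hsc : 0 < Real.sinh c := Real.sinh_pos_iff.mpr hc
  apply strictAntiOn_of_deriv_neg (convex_Ici 0)
  · apply ContinuousOn.add
    apply ContinuousOn.add
    · exact (Real.continuous_arccos.comp_continuousOn
        (ContinuousOn.div (by fun_prop) (by fun_prop)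
          (fun y hy => by
            have hy0 : (0:ℝ) ≤ y := hy
            have h1 : 0 < Real.sinh (y+b) := Real.sinh_pos_iff.mpr (by linarith)
            have h2 : 0 < Real.sinh (y+c) := Real.sinh_pos_iff.mpr (by linarith)
            positivity))).mul Real.continuous_cosh.continuousOn
    · exact (Real.continuous_arccos.comp_continuousOn
        (ContinuousOn.div (by fun_prop) (by fun_prop)
          (fun y hy => by
            have hy0 : (0:ℝ) ≤ y := hy
            have h1 : 0 < Real.sinh (y+b) := Real.sinh_pos_iff.mpr (by linarith)
            positivity))).mul continuousOn_const
    · exact (Real.continuous_arccos.comp_continuousOn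
        (ContinuousOn.div (by fun_prop) (by fun_prop)
          (fun y hy => by
            have hy0 : (0:ℝ) ≤ y := hy
            have h2 : 0 < Real.sinh (y+c) := Real.sinh_pos_iff.mpr (by linarith)
            positivity))).mul continuousOn_const
  · intro x hx
    rw [interior_Ici, Set.mem_Ioi] at hx
    have hsxb : 0 < Real.sinh (x+b) := Real.sinh_pos_iff.mpr (by linarith)
    have hsxc : 0 < Real.sinh (x+c) := Real.sinh_pos_iff.mpr (by linarith)
    have hsx : 0 < Real.sinh x := Real.sinh_pos_iff.mpr hx
    have hS : 0 < Real.sinh (x+b+c) := Real.sinh_pos_iff.mpr (by linarith)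
    have hd1 : 0 < Real.sinh (x+b) * Real.sinh (x+c) := mul_pos hsxb hsxc
    have hd2 : 0 < Real.sinh (x+b) * Real.sinh (b+c) := mul_pos hsxb hsbc
    have hd3 : 0 < Real.sinh (x+c) * Real.sinh (b+c) := mul_pos hsxc hsbc
    have hV : 0 < Real.sinh (x+b+c) * Real.sinh x * Real.sinh b * Real.sinh c := by positivity
    have hW : 0 < Real.sqrt (Real.sinh (x+b+c) * Real.sinh x * Real.sinh b * Real.sinh c) :=
      Real.sqrt_pos.mpr hV
    have hWW : Real.sqrt (Real.sinh (x+b+c) * Real.sinh x * Real.sinh b * Real.sinh c) *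
        Real.sqrt (Real.sinh (x+b+c) * Real.sinh x * Real.sinh b * Real.sinh c)
        = Real.sinh (x+b+c) * Real.sinh x * Real.sinh b * Real.sinh c :=
      Real.mul_self_sqrt hV.le
    -- bounds on the arccos arguments
    have hq1lt : (Real.cosh (x+b) * Real.cosh (x+c) - Real.cosh (b+c)) /
        (Real.sinh (x+b) * Real.sinh (x+c)) < 1 := by
      rw [div_lt_one hd1]; nlinarith [hypJ1 x b c, mul_pos hsb hsc]
    have hq1gt : -1 < (Real.cosh (x+b) * Real.cosh (x+c) - Real.cosh (b+c)) /
        (Real.sinh (x+b) * Real.sinh (x+c)) := by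
      rw [lt_div_iff₀ hd1]; nlinarith [hypJ4 x b c, mul_pos hS hsx]
    have hq2lt : (Real.cosh (x+b) * Real.cosh (b+c) - Real.cosh (x+c)) /
        (Real.sinh (x+b) * Real.sinh (b+c)) < 1 := by
      rw [div_lt_one hd2]; nlinarith [hypJ5 x b c, mul_pos hsx hsc]
    have hq2gt : -1 < (Real.cosh (x+b) * Real.cosh (b+c) - Real.cosh (x+c)) /
        (Real.sinh (x+b) * Real.sinh (b+c)) := by
      rw [lt_div_iff₀ hd2]; nlinarith [hypJ6 x b c, mul_pos hS hsb]
    have hq3lt : (Real.cosh (x+c) * Real.cosh (b+c) - Real.cosh (x+b)) /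
        (Real.sinh (x+c) * Real.sinh (b+c)) < 1 := by
      rw [div_lt_one hd3]; nlinarith [hypJ7 x b c, mul_pos hsx hsb]
    have hq3gt : -1 < (Real.cosh (x+c) * Real.cosh (b+c) - Real.cosh (x+b)) /
        (Real.sinh (x+c) * Real.sinh (b+c)) := by
      rw [lt_div_iff₀ hd3]; nlinarith [hypJ8 x b c, mul_pos hS hsc]
    -- elementary derivatives
    have hcoshxb : HasDerivAt (fun y : ℝ => Real.cosh (y+b)) (Real.sinh (x+b)) x := by
      simpa using ((hasDerivAt_id x).add_const b).cosh
    have hcoshxc : HasDerivAt (fun y : ℝ => Real.cosh (y+c)) (Real.sinh (x+c)) x := by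
      simpa using ((hasDerivAt_id x).add_const c).cosh
    have hsinhxb : HasDerivAt (fun y : ℝ => Real.sinh (y+b)) (Real.cosh (x+b)) x := by
      simpa using ((hasDerivAt_id x).add_const b).sinh
    have hsinhxc : HasDerivAt (fun y : ℝ => Real.sinh (y+c)) (Real.cosh (x+c)) x := by
      simpa using ((hasDerivAt_id x).add_const c).sinh
    -- derivative of the first arccos term
    have hn1 : HasDerivAt (fun y : ℝ => Real.cosh (y+b) * Real.cosh (y+c) - Real.cosh (b+c))
        (Real.sinh (x+b) * Real.cosh (x+c) + Real.cosh (x+b) * Real.sinh (x+c)) x :=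
      (hcoshxb.mul hcoshxc).sub_const _
    have hd1' : HasDerivAt (fun y : ℝ => Real.sinh (y+b) * Real.sinh (y+c))
        (Real.cosh (x+b) * Real.sinh (x+c) + Real.sinh (x+b) * Real.cosh (x+c)) x :=
      hsinhxb.mul hsinhxc
    have hq1 : HasDerivAt (fun y : ℝ =>
          (Real.cosh (y+b) * Real.cosh (y+c) - Real.cosh (b+c)) /
            (Real.sinh (y+b) * Real.sinh (y+c)))
        (((Real.sinh (x+b) * Real.cosh (x+c) + Real.cosh (x+b) * Real.sinh (x+c)) *
            (Real.sinh (x+b) * Real.sinh (x+c)) -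
          (Real.cosh (x+b) * Real.cosh (x+c) - Real.cosh (b+c)) *
            (Real.cosh (x+b) * Real.sinh (x+c) + Real.sinh (x+b) * Real.cosh (x+c))) /
          (Real.sinh (x+b) * Real.sinh (x+c)) ^ 2) x :=
      hn1.div hd1' hd1.ne'
    have hnum1 : (Real.sinh (x+b) * Real.cosh (x+c) + Real.cosh (x+b) * Real.sinh (x+c)) *
            (Real.sinh (x+b) * Real.sinh (x+c)) -
          (Real.cosh (x+b) * Real.cosh (x+c) - Real.cosh (b+c)) *
            (Real.cosh (x+b) * Real.sinh (x+c) + Real.sinh (x+b) * Real.cosh (x+c))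
        = 2 * Real.sinh b * Real.sinh c *
            (Real.sinh (x+b) * Real.cosh (x+c) + Real.cosh (x+b) * Real.sinh (x+c)) := by
      linear_combination (Real.sinh (x+b) * Real.cosh (x+c) + Real.cosh (x+b) * Real.sinh (x+c)) *
        hypJ1 x b c
    have hθ1 : HasDerivAt (fun y : ℝ => Real.arccos
          ((Real.cosh (y+b) * Real.cosh (y+c) - Real.cosh (b+c)) /
            (Real.sinh (y+b) * Real.sinh (y+c))))
        (-(Real.sinh b * Real.sinh c *
            (Real.sinh (x+b) * Real.cosh (x+c) + Real.cosh (x+b) * Real.sinh (x+c))) /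
          (Real.sqrt (Real.sinh (x+b+c) * Real.sinh x * Real.sinh b * Real.sinh c) *
            (Real.sinh (x+b) * Real.sinh (x+c)))) x := by
      have h := (Real.hasDerivAt_arccos (ne_of_gt hq1gt) (ne_of_lt hq1lt)).comp x hq1
      refine h.congr_deriv ?_
      rw [sqrt_aux hd1 hV (hypJ0a x b c), hnum1]
      field_simp
    -- derivative of the second arccos term
    have hn2 : HasDerivAt (fun y : ℝ => Real.cosh (y+b) * Real.cosh (b+c) - Real.cosh (y+c))
        (Real.sinh (x+b) * Real.cosh (b+c) - Real.sinh (x+c)) x :=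
      (hcoshxb.mul_const _).sub hcoshxc
    have hd2' : HasDerivAt (fun y : ℝ => Real.sinh (y+b) * Real.sinh (b+c))
        (Real.cosh (x+b) * Real.sinh (b+c)) x :=
      hsinhxb.mul_const _
    have hq2 : HasDerivAt (fun y : ℝ =>
          (Real.cosh (y+b) * Real.cosh (b+c) - Real.cosh (y+c)) /
            (Real.sinh (y+b) * Real.sinh (b+c)))
        (((Real.sinh (x+b) * Real.cosh (b+c) - Real.sinh (x+c)) *
            (Real.sinh (x+b) * Real.sinh (b+c)) -
          (Real.cosh (x+b) * Real.cosh (b+c) - Real.cosh (x+c)) *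
            (Real.cosh (x+b) * Real.sinh (b+c))) /
          (Real.sinh (x+b) * Real.sinh (b+c)) ^ 2) x :=
      hn2.div hd2' hd2.ne'
    have hθ2 : HasDerivAt (fun y : ℝ => Real.arccos
          ((Real.cosh (y+b) * Real.cosh (b+c) - Real.cosh (y+c)) /
            (Real.sinh (y+b) * Real.sinh (b+c))))
        (Real.sinh b * Real.sinh c /
          (Real.sqrt (Real.sinh (x+b+c) * Real.sinh x * Real.sinh b * Real.sinh c) *
            Real.sinh (x+b))) x := by
      have h := (Real.hasDerivAt_arccos (ne_of_gt hq2gt) (ne_of_lt hq2lt)).comp x hq2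
      refine h.congr_deriv ?_
      rw [sqrt_aux hd2 hV (hypJ0b x b c), hypP2 x b c]
      field_simp
    -- derivative of the third arccos term
    have hn3 : HasDerivAt (fun y : ℝ => Real.cosh (y+c) * Real.cosh (b+c) - Real.cosh (y+b))
        (Real.sinh (x+c) * Real.cosh (b+c) - Real.sinh (x+b)) x :=
      (hcoshxc.mul_const _).sub hcoshxb
    have hd3' : HasDerivAt (fun y : ℝ => Real.sinh (y+c) * Real.sinh (b+c))
        (Real.cosh (x+c) * Real.sinh (b+c)) x :=
      hsinhxc.mul_const _
    have hq3 : HasDerivAt (fun y : ℝ =>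
          (Real.cosh (y+c) * Real.cosh (b+c) - Real.cosh (y+b)) /
            (Real.sinh (y+c) * Real.sinh (b+c)))
        (((Real.sinh (x+c) * Real.cosh (b+c) - Real.sinh (x+b)) *
            (Real.sinh (x+c) * Real.sinh (b+c)) -
          (Real.cosh (x+c) * Real.cosh (b+c) - Real.cosh (x+b)) *
            (Real.cosh (x+c) * Real.sinh (b+c))) /
          (Real.sinh (x+c) * Real.sinh (b+c)) ^ 2) x :=
      hn3.div hd3' hd3.ne'
    have hθ3 : HasDerivAt (fun y : ℝ => Real.arccos
          ((Real.cosh (y+c) * Real.cosh (b+c) - Real.cosh (y+b)) /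
            (Real.sinh (y+c) * Real.sinh (b+c))))
        (Real.sinh b * Real.sinh c /
          (Real.sqrt (Real.sinh (x+b+c) * Real.sinh x * Real.sinh b * Real.sinh c) *
            Real.sinh (x+c))) x := by
      have h := (Real.hasDerivAt_arccos (ne_of_gt hq3gt) (ne_of_lt hq3lt)).comp x hq3
      refine h.congr_deriv ?_
      rw [sqrt_aux hd3 hV (hypJ0c x b c), hypP3 x b c]
      field_simp
    -- assemble the derivative of the whole function
    have hg : HasDerivAt (fun x : ℝ =>
        Real.arccos ((Real.cosh (x+b) * Real.cosh (x+c) - Real.cosh (b+c)) /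
            (Real.sinh (x+b) * Real.sinh (x+c))) * Real.cosh x +
        Real.arccos ((Real.cosh (x+b) * Real.cosh (b+c) - Real.cosh (x+c)) /
            (Real.sinh (x+b) * Real.sinh (b+c))) * Real.cosh b +
        Real.arccos ((Real.cosh (x+c) * Real.cosh (b+c) - Real.cosh (x+b)) /
            (Real.sinh (x+c) * Real.sinh (b+c))) * Real.cosh c)
        ((-(Real.sinh b * Real.sinh c *
            (Real.sinh (x+b) * Real.cosh (x+c) + Real.cosh (x+b) * Real.sinh (x+c))) /
          (Real.sqrt (Real.sinh (x+b+c) * Real.sinh x * Real.sinh b * Real.sinh c) *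
            (Real.sinh (x+b) * Real.sinh (x+c))) * Real.cosh x +
          Real.arccos ((Real.cosh (x+b) * Real.cosh (x+c) - Real.cosh (b+c)) /
            (Real.sinh (x+b) * Real.sinh (x+c))) * Real.sinh x) +
         Real.sinh b * Real.sinh c /
          (Real.sqrt (Real.sinh (x+b+c) * Real.sinh x * Real.sinh b * Real.sinh c) *
            Real.sinh (x+b)) * Real.cosh b +
         Real.sinh b * Real.sinh c /
          (Real.sqrt (Real.sinh (x+b+c) * Real.sinh x * Real.sinh b * Real.sinh c) *
            Real.sinh (x+c)) * Real.cosh c) x :=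
      ((hθ1.mul (Real.hasDerivAt_cosh x)).add (hθ2.mul_const _)).add (hθ3.mul_const _)
    rw [hg.deriv]
    -- the angle bound : arccos q1 < 2 tan(arccos q1 / 2) = 2 sinh b sinh c / W
    have harc := arccos_lt_tanHalf hq1gt hq1lt
    rw [sqrt_aux hd1 hV (hypJ0a x b c)] at harc
    have ht1 : 2 * Real.sqrt (Real.sinh (x+b+c) * Real.sinh x * Real.sinh b * Real.sinh c) /
        (Real.sinh (x+b) * Real.sinh (x+c)) /
        (1 + (Real.cosh (x+b) * Real.cosh (x+c) - Real.cosh (b+c)) /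
          (Real.sinh (x+b) * Real.sinh (x+c)))
        = Real.sinh b * Real.sinh c /
            Real.sqrt (Real.sinh (x+b+c) * Real.sinh x * Real.sinh b * Real.sinh c) := by
      rw [div_div]
      have hp : Real.sinh (x+b) * Real.sinh (x+c) *
          (1 + (Real.cosh (x+b) * Real.cosh (x+c) - Real.cosh (b+c)) /
            (Real.sinh (x+b) * Real.sinh (x+c)))
          = 2 * Real.sinh (x+b+c) * Real.sinh x := by
        field_simp
        linear_combination hypJ4 x b c
      rw [hp, div_eq_div_iff (by positivity) hW.ne']
      linear_combination 2 * hWW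
    rw [ht1] at harc
    have harcmul := mul_lt_mul_of_pos_right harc hsx
    -- the key algebraic identity for the non-angle part of the derivative
    have hkey : -(Real.sinh b * Real.sinh c *
          (Real.sinh (x+b) * Real.cosh (x+c) + Real.cosh (x+b) * Real.sinh (x+c))) /
        (Real.sqrt (Real.sinh (x+b+c) * Real.sinh x * Real.sinh b * Real.sinh c) *
          (Real.sinh (x+b) * Real.sinh (x+c))) * Real.cosh x +
      Real.sinh b * Real.sinh c /
        (Real.sqrt (Real.sinh (x+b+c) * Real.sinh x * Real.sinh b * Real.sinh c) *
          Real.sinh (x+b)) * Real.cosh b +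
      Real.sinh b * Real.sinh c /
        (Real.sqrt (Real.sinh (x+b+c) * Real.sinh x * Real.sinh b * Real.sinh c) *
          Real.sinh (x+c)) * Real.cosh c
        = -(2 * (Real.sinh b * Real.sinh c /
              Real.sqrt (Real.sinh (x+b+c) * Real.sinh x * Real.sinh b * Real.sinh c)) *
            Real.sinh x) := by
      have e : -(Real.sinh b * Real.sinh c *
            (Real.sinh (x+b) * Real.cosh (x+c) + Real.cosh (x+b) * Real.sinh (x+c))) /
          (Real.sqrt (Real.sinh (x+b+c) * Real.sinh x * Real.sinh b * Real.sinh c) *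
            (Real.sinh (x+b) * Real.sinh (x+c))) * Real.cosh x +
        Real.sinh b * Real.sinh c /
          (Real.sqrt (Real.sinh (x+b+c) * Real.sinh x * Real.sinh b * Real.sinh c) *
            Real.sinh (x+b)) * Real.cosh b +
        Real.sinh b * Real.sinh c /
          (Real.sqrt (Real.sinh (x+b+c) * Real.sinh x * Real.sinh b * Real.sinh c) *
            Real.sinh (x+c)) * Real.cosh c
          = Real.sinh b * Real.sinh c *
              (Real.cosh b * Real.sinh (x+c) + Real.cosh c * Real.sinh (x+b)
                - Real.cosh x * (Real.sinh (x+b) * Real.cosh (x+c) +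
                    Real.cosh (x+b) * Real.sinh (x+c))) /
              (Real.sqrt (Real.sinh (x+b+c) * Real.sinh x * Real.sinh b * Real.sinh c) *
                (Real.sinh (x+b) * Real.sinh (x+c))) := by
        field_simp
        ring
      rw [e, hypJ3 x b c]
      field_simp
    linarith [harcmul, hkey]

private lemma aux_zero (b c : ℝ) (hb : 0 < b) (hc : 0 < c) :
    Real.arccos ((Real.cosh ((0:ℝ)+b) * Real.cosh ((0:ℝ)+c) - Real.cosh (b+c)) /
        (Real.sinh ((0:ℝ)+b) * Real.sinh ((0:ℝ)+c))) * Real.cosh (0:ℝ) +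
      Real.arccos ((Real.cosh ((0:ℝ)+b) * Real.cosh (b+c) - Real.cosh ((0:ℝ)+c)) /
        (Real.sinh ((0:ℝ)+b) * Real.sinh (b+c))) * Real.cosh b +
      Real.arccos ((Real.cosh ((0:ℝ)+c) * Real.cosh (b+c) - Real.cosh ((0:ℝ)+b)) /
        (Real.sinh ((0:ℝ)+c) * Real.sinh (b+c))) * Real.cosh c = π := by
  have hsbc : 0 < Real.sinh (b+c) := Real.sinh_pos_iff.mpr (by linarith)
  have hsb : 0 < Real.sinh b := Real.sinh_pos_iff.mpr hb
  have hsc : 0 < Real.sinh c := Real.sinh_pos_iff.mpr hc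
  have e1 : Real.cosh b * Real.cosh c - Real.cosh (b+c) = -(Real.sinh b * Real.sinh c) := by
    rw [Real.cosh_add]; ring
  simp only [zero_add]
  rw [e1, eZero2 b c, eZero3 b c, neg_div, div_self (mul_pos hsb hsc).ne',
    div_self (mul_pos hsb hsbc).ne', div_self (mul_pos hsc hsbc).ne',
    Real.arccos_neg_one, Real.arccos_one, Real.cosh_zero]
  ring

theorem stmt_10 (r1 r2 r3 : ℝ) (h1 : 0 < r1) (h2 : 0 < r2) (h3 : 0 < r3) :
    innerAngle r1 r2 r3 * Real.cosh r1 + innerAngle r2 r1 r3 * Real.cosh r2 +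
      innerAngle r3 r1 r2 * Real.cosh r3 < π := by
  have key := aux_anti r2 r3 h2 h3
  have hlt := key (Set.mem_Ici.mpr le_rfl) (Set.mem_Ici.mpr h1.le) h1
  simp only at hlt
  rw [aux_zero r2 r3 h2 h3] at hlt
  simp only [innerAngle]
  rw [add_comm r2 r1, add_comm r3 r1, add_comm r3 r2]
  exact hlt
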